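/- If G is a connected graph and G' is the graph obtained from G by iteratively deleting vertices of degree 1 (the base graph of G), and G' is nonempty, then dem(G) = dem(G'). -/

import Mathlib

open SimpleGraph

/-- `e` is monitored by vertex `x` in `G`: some vertex `y` has its distance to `x`
changed when `e` is deleted (distances in `ℕ∞`, `⊤` if disconnected). -/
def monitors {V : Type*} (G : SimpleGraph V) (x : V) (e : Sym2 V) : Prop :=
  ∃ y : V, G.edist x y ≠ (G.deleteEdges {e}).edist x y

/-- `M` is a distance-edge-monitoring set of `G`. -/
def IsDEMSet {V : Type*} (G : SimpleGraph V) (M : Set V) : Prop :=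
  ∀ e ∈ G.edgeSet, ∃ x ∈ M, monitors G x e

/-- The smallest size of a distance-edge-monitoring set of `G`. -/
noncomputable def dem (V : Type*) [Fintype V] (G : SimpleGraph V) : ℕ :=
  sInf {k | ∃ M : Finset V, M.card = k ∧ IsDEMSet G ↑M}

/-- The set `P(M, e)` of pairs `(x, y)`, `x ∈ M`, whose distance changes when `e` is deleted. -/
def pairs {V : Type*} (G : SimpleGraph V) (M : Set V) (e : Sym2 V) : Set (V × V) :=
  {p | p.1 ∈ M ∧ G.edist p.1 p.2 ≠ (G.deleteEdges {e}).edist p.1 p.2}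

/-- `C` is a vertex cover of `G`. -/
def IsVC {V : Type*} (G : SimpleGraph V) (C : Set V) : Prop :=
  ∀ e ∈ G.edgeSet, ∃ v ∈ C, v ∈ e

/-- The vertex cover number of `G`. -/
noncomputable def vcNum (V : Type*) [Fintype V] (G : SimpleGraph V) : ℕ :=
  sInf {k | ∃ C : Finset V, C.card = k ∧ IsVC G ↑C}

/-- The feedback edge set number: minimum number of edges whose deletion leaves a forest. -/
noncomputable def fes (V : Type*) [Fintype V] (G : SimpleGraph V) : ℕ :=
  sInf {k | ∃ F : Finset (Sym2 V), F.card = k ∧ (G.deleteEdges ↑F).IsAcyclic}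


section DEMHelpers

variable {V : Type*} {G : SimpleGraph V} {S : Set V}



variable {V : Type*} {G : SimpleGraph V} {S : Set V}

lemma two_le_ncard_pair [Finite V] {T : Set V} {a b : V} (ha : a ∈ T) (hb : b ∈ T)
    (h : a ≠ b) : 2 ≤ T.ncard :=
  (Set.one_lt_ncard (Set.toFinite T)).2 ⟨a, ha, b, hb, h⟩

lemma internal_two_nbrs : ∀ {x y : V} (p : G.Walk x y), p.IsPath → ∀ v ∈ p.support, v ≠ x → v ≠ y →
    ∃ a b, a ∈ p.support ∧ b ∈ p.support ∧ G.Adj v a ∧ G.Adj v b ∧ a ≠ b := by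
  intro x y p
  induction p with
  | nil => intro _ v hv hvx _; simp only [Walk.support_nil, List.mem_singleton] at hv
           exact absurd hv hvx
  | @cons x w y h q ih =>
    intro hp v hv hvx hvy
    rw [Walk.support_cons, List.mem_cons] at hv
    rcases hv with rfl | hv
    · exact absurd rfl hvx
    by_cases hvw : v = w
    · subst hvw
      cases q with
      | nil => exact absurd rfl hvy
      | @cons _ z _ h2 q2 =>
        refine ⟨x, z, ?_, ?_, h.symm, h2, ?_⟩
        · exact Walk.start_mem_support _
        · rw [Walk.support_cons, List.mem_cons]
          right
          rw [Walk.support_cons, List.mem_cons]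
          right
          exact Walk.start_mem_support _
        · intro hxz
          have hx_not := ((Walk.cons_isPath_iff _ _).1 hp).2
          apply hx_not
          rw [hxz, Walk.support_cons, List.mem_cons]
          right
          exact Walk.start_mem_support _
    · obtain ⟨a, b, haS, hbS, h1, h2, h3⟩ :=
        ih hp.of_cons v hv hvw hvy
      exact ⟨a, b, by rw [Walk.support_cons]; exact List.mem_cons_of_mem _ haS,
        by rw [Walk.support_cons]; exact List.mem_cons_of_mem _ hbS, h1, h2, h3⟩

lemma endpoint_nbr {x y : V} {p : G.Walk x y} (hp : p.IsPath) (hl : 2 ≤ p.length) :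
    ∃ w, w ∈ p.support ∧ G.Adj x w ∧ w ≠ y := by
  cases p with
  | nil => simp at hl
  | @cons _ w _ h q =>
    refine ⟨w, ?_, h, ?_⟩
    · rw [Walk.support_cons, List.mem_cons]
      right
      exact Walk.start_mem_support _
    · rintro rfl
      have := Walk.isPath_iff_eq_nil.1 hp.of_cons
      subst this
      simp at hl

lemma two_le_length_of_edge_not_mem {a b : V} (p : G.Walk a b) (hab : G.Adj a b)
    (hne : s(a, b) ∉ p.edges) : 2 ≤ p.length := by
  cases p with
  | nil => exact absurd rfl hab.ne
  | @cons _ w _ h q =>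
    cases q with
    | nil => exact absurd (by simp) hne
    | cons h2 q2 => simp only [Walk.length_cons]; omega

lemma path_support_subset [Finite V]
    (hS : ∀ v ∈ S, 2 ≤ (S ∩ G.neighborSet v).ncard)
    (hmax : ∀ T : Set V, (∀ v ∈ T, 2 ≤ (T ∩ G.neighborSet v).ncard) → T ⊆ S)
    {x y : V} (hx : x ∈ S) (hy : y ∈ S)
    {p : G.Walk x y} (hp : p.IsPath) : ∀ v ∈ p.support, v ∈ S := by
  intro v hv
  have hsub : S ∪ {v | v ∈ p.support} ⊆ S := by
    apply hmax
    intro w hw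
    by_cases hwS : w ∈ S
    · exact (hS w hwS).trans (Set.ncard_le_ncard
        (Set.inter_subset_inter_left _ Set.subset_union_left) (Set.toFinite _))
    · have hw' : w ∈ p.support := hw.resolve_left hwS
      have hwx : w ≠ x := fun h => hwS (h ▸ hx)
      have hwy : w ≠ y := fun h => hwS (h ▸ hy)
      obtain ⟨a, b, ha, hb, h1, h2, h3⟩ := internal_two_nbrs p hp w hw' hwx hwy
      exact two_le_ncard_pair ⟨Or.inr ha, h1⟩ ⟨Or.inr hb, h2⟩ h3
  exact hsub (Or.inr hv)

lemma outside_bridge [Finite V] [DecidableEq V]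
    (hS : ∀ v ∈ S, 2 ≤ (S ∩ G.neighborSet v).ncard)
    (hmax : ∀ T : Set V, (∀ v ∈ T, 2 ≤ (T ∩ G.neighborSet v).ncard) → T ⊆ S)
    {a b : V} (hab : G.Adj a b) (ha : a ∉ S) :
    ¬ (G.deleteEdges {s(a, b)}).Reachable a b := by
  intro hr
  obtain ⟨w0⟩ := hr
  have hp0 : w0.bypass.IsPath := w0.bypass_isPath
  have hedges : ∀ e ∈ w0.bypass.edges, e ∈ G.edgeSet := by
    intro e hee
    have := w0.bypass.edges_subset_edgeSet hee
    rw [edgeSet_deleteEdges] at this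
    exact this.1
  have hnotmem : ∀ e ∈ w0.bypass.edges, e ≠ s(a, b) := by
    intro e hee hcontra
    have := w0.bypass.edges_subset_edgeSet hee
    rw [edgeSet_deleteEdges] at this
    exact this.2 (hcontra ▸ rfl)
  set p : G.Walk a b := w0.bypass.transfer G hedges with hpdef
  have hp : p.IsPath := hp0.transfer _
  have hne : s(a, b) ∉ p.edges := by
    rw [hpdef, Walk.edges_transfer]
    intro hmem
    exact hnotmem _ hmem rfl
  have hlen : 2 ≤ p.length := two_le_length_of_edge_not_mem p hab hne
  have hsub : S ∪ {v | v ∈ p.support} ⊆ S := by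
    apply hmax
    intro w hw
    by_cases hwS : w ∈ S
    · exact (hS w hwS).trans (Set.ncard_le_ncard
        (Set.inter_subset_inter_left _ Set.subset_union_left) (Set.toFinite _))
    · have hw' : w ∈ p.support := hw.resolve_left hwS
      by_cases hwa : w = a
      · subst hwa
        obtain ⟨z, hz, hadj, hzb⟩ := endpoint_nbr hp hlen
        exact two_le_ncard_pair (a := b) (b := z)
          ⟨Or.inr (p.end_mem_support), hab⟩ ⟨Or.inr hz, hadj⟩ (Ne.symm hzb)
      · by_cases hwb : w = b
        · subst hwb
          obtain ⟨z, hz, hadj, hza⟩ := endpoint_nbr hp.reverse (by rwa [Walk.length_reverse])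
          rw [Walk.support_reverse, List.mem_reverse] at hz
          exact two_le_ncard_pair (a := a) (b := z)
            ⟨Or.inr (p.start_mem_support), hab.symm⟩ ⟨Or.inr hz, hadj⟩ (Ne.symm hza)
        · obtain ⟨c, d, hc, hd, h1, h2, h3⟩ := internal_two_nbrs p hp w hw' hwa hwb
          exact two_le_ncard_pair ⟨Or.inr hc, h1⟩ ⟨Or.inr hd, h2⟩ h3
  exact ha (hsub (Or.inr p.start_mem_support))


section Part23
variable [Finite V] [DecidableEq V]
variable (hS : ∀ v ∈ S, 2 ≤ (S ∩ G.neighborSet v).ncard)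
variable (hmax : ∀ T : Set V, (∀ v ∈ T, 2 ≤ (T ∩ G.neighborSet v).ncard) → T ⊆ S)
include hS hmax
set_option linter.unusedSectionVars false

lemma exists_S_walk (hG : G.Connected) {x y : V} (hx : x ∈ S) (hy : y ∈ S) :
    ∃ p : G.Walk x y, ∀ v ∈ p.support, v ∈ S :=
  ⟨(hG.preconnected x y).some.bypass,
    path_support_subset hS hmax hx hy ((hG.preconnected x y).some.bypass_isPath)⟩

lemma exists_anchor_path_aux : ∀ {u s0 : V}, G.Walk u s0 → s0 ∈ S → u ∉ S →
    ∃ s ∈ S, ∃ p : G.Walk u s, p.IsPath ∧ ∀ v ∈ p.support, v ≠ s → v ∉ S := by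
  intro u s0 w
  induction w with
  | nil => intro h hu; exact absurd h hu
  | @cons u v s0 h q ih =>
    intro hs0 hu
    by_cases hv : v ∈ S
    · refine ⟨v, hv, Walk.cons h Walk.nil, ?_, ?_⟩
      · rw [Walk.cons_isPath_iff]
        exact ⟨Walk.IsPath.nil, by simp [h.ne]⟩
      · intro z hz hzv
        rw [Walk.support_cons, List.mem_cons] at hz
        rcases hz with rfl | hz
        · exact hu
        · simp only [Walk.support_nil, List.mem_singleton] at hz
          exact absurd hz hzv
    · obtain ⟨s, hsS, p, hp, hprop⟩ := ih hs0 hv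
      refine ⟨s, hsS, (Walk.cons h p).bypass, Walk.bypass_isPath _, ?_⟩
      intro z hz hzs
      have hz' := (Walk.cons h p).support_bypass_subset hz
      rw [Walk.support_cons, List.mem_cons] at hz'
      rcases hz' with rfl | hz'
      · exact hu
      · exact hprop z hz' hzs

lemma anchor_spec (hG : G.Connected) (hne : S.Nonempty) {u : V} (hu : u ∉ S) :
    ∃ s ∈ S, ∀ y ∈ S, ∀ w : G.Walk u y, s ∈ w.support := by
  obtain ⟨s, hsS, p, hp, hint⟩ :=
    exists_anchor_path_aux hS hmax ((hG.preconnected u hne.choose).some) hne.choose_spec hu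
  refine ⟨s, hsS, ?_⟩
  intro y hy w
  by_contra hsw
  have hus : u ≠ s := fun h => hu (h ▸ hsS)
  obtain ⟨v, h1, q, hq⟩ := Walk.exists_eq_cons_of_ne (Ne.symm hus) p.reverse
  have hpr : p.reverse.IsPath := hp.reverse
  rw [hq] at hpr
  have hsq : s ∉ q.support := ((Walk.cons_isPath_iff _ _).1 hpr).2
  have hvS : v ∉ S := by
    refine hint v ?_ ?_
    · have : v ∈ p.reverse.support := by
        rw [hq, Walk.support_cons]
        exact List.mem_cons_of_mem _ q.start_mem_support
      rwa [Walk.support_reverse, List.mem_reverse] at this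
    · intro hveq
      exact hsq (hveq ▸ q.start_mem_support)
  refine outside_bridge hS hmax h1.symm hvS ?_
  have r1 : (G.deleteEdges {s(v, s)}).Reachable v u := by
    refine ⟨q.toDeleteEdges _ ?_⟩
    intro e he hmem
    rw [Set.mem_singleton_iff] at hmem
    subst hmem
    exact hsq (q.snd_mem_support_of_mem_edges he)
  have r2 : (G.deleteEdges {s(v, s)}).Reachable u y := by
    refine ⟨w.toDeleteEdges _ ?_⟩
    intro e he hmem
    rw [Set.mem_singleton_iff] at hmem
    subst hmem
    exact hsw (w.snd_mem_support_of_mem_edges he)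
  have r3 : (G.deleteEdges {s(v, s)}).Reachable y s := by
    obtain ⟨r, hr⟩ := exists_S_walk hS hmax hG hy hsS
    refine ⟨r.toDeleteEdges _ ?_⟩
    intro e he hmem
    rw [Set.mem_singleton_iff] at hmem
    subst hmem
    exact hvS (hr v (r.fst_mem_support_of_mem_edges he))
  exact r1.trans (r2.trans r3)

lemma edist_split {H : SimpleGraph V} {u s y : V}
    (hall : ∀ w : H.Walk u y, s ∈ w.support) :
    H.edist u y = H.edist u s + H.edist s y := by
  refine le_antisymm H.edist_triangle ?_
  by_cases htop : H.edist u y = ⊤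
  · rw [htop]; exact le_top
  · obtain ⟨w, hw⟩ := (edist_ne_top_iff_reachable.1 htop).exists_walk_length_eq_edist
    have hs := hall w
    calc H.edist u s + H.edist s y
        ≤ ((w.takeUntil s hs).length : ℕ∞) + ((w.dropUntil s hs).length : ℕ∞) :=
          add_le_add (edist_le _) (edist_le _)
      _ = ((w.takeUntil s hs).length + (w.dropUntil s hs).length : ℕ) := by push_cast; ring
      _ = (w.length : ℕ∞) := by
          rw [← Walk.length_append, Walk.take_spec]
      _ = H.edist u y := hw

lemma edist_del_anchor (hG : G.Connected) {u s : V} (hsS : s ∈ S)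
    (hspec : ∀ y ∈ S, ∀ w : G.Walk u y, s ∈ w.support)
    {a b : V} (haS : a ∈ S) (hbS : b ∈ S) (hab : G.Adj a b) :
    (G.deleteEdges {s(a, b)}).edist u s = G.edist u s := by
  refine le_antisymm ?_ (edist_anti (deleteEdges_le _))
  obtain ⟨w, hw⟩ := (hG.preconnected u s).exists_walk_length_eq_edist
  have hγp : w.bypass.IsPath := w.bypass_isPath
  have hγe : ∀ e' ∈ w.bypass.edges, e' ∉ ({s(a, b)} : Set (Sym2 V)) := by
    intro e' he' hmem
    rw [Set.mem_singleton_iff] at hmem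
    subst hmem
    -- pick c ∈ {a,b}, c ≠ s
    have key : ∀ c : V, c ∈ S → c ≠ s → c ∈ w.bypass.support → False := by
      intro c hcS hcs hcsupp
      have hstake := hspec c hcS (w.bypass.takeUntil c hcsupp)
      have hsdrop : s ∈ (w.bypass.dropUntil c hcsupp).support.tail :=
        Walk.end_mem_tail_support_of_ne hcs _
      have hnd := hγp.support_nodup
      rw [← Walk.take_spec w.bypass hcsupp, Walk.support_append] at hnd
      exact List.disjoint_of_nodup_append hnd hstake hsdrop
    by_cases has : a = s
    · subst has
      exact key b hbS (fun h => hab.ne (h ▸ rfl)) (w.bypass.snd_mem_support_of_mem_edges he')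
    · exact key a haS has (w.bypass.fst_mem_support_of_mem_edges he')
  calc (G.deleteEdges {s(a, b)}).edist u s
      ≤ ((w.bypass.toDeleteEdges _ hγe).length : ℕ∞) := edist_le _
    _ = (w.bypass.length : ℕ∞) := by rw [Walk.length_transfer]
    _ ≤ (w.length : ℕ∞) := by exact_mod_cast w.length_bypass_le
    _ = G.edist u s := hw

lemma edist_eq_of_avoid (hG : G.Connected) {u y s : V} (hu : u ∉ S) (hsS : s ∈ S)
    (hspec : ∀ z ∈ S, ∀ w : G.Walk u z, s ∈ w.support)
    {a b : V} (haS : a ∈ S) (hbS : b ∈ S)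
    (w0 : G.Walk u y) (hw0 : s ∉ w0.support) :
    (G.deleteEdges {s(a, b)}).edist u y = G.edist u y := by
  refine le_antisymm ?_ (edist_anti (deleteEdges_le _))
  have hry : G.Reachable u y := ⟨w0⟩
  obtain ⟨w, hw⟩ := hry.exists_walk_length_eq_edist
  have hγp : w.bypass.IsPath := w.bypass_isPath
  by_cases hsγ : s ∈ w.bypass.support
  · exfalso
    have hus : u ≠ s := fun h => hu (h ▸ hsS)
    have hγ1p : (w.bypass.takeUntil s hsγ).IsPath := hγp.takeUntil _
    obtain ⟨z, h1, q, hq⟩ :=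
      Walk.exists_eq_cons_of_ne (Ne.symm hus) (w.bypass.takeUntil s hsγ).reverse
    have hpr : (w.bypass.takeUntil s hsγ).reverse.IsPath := hγ1p.reverse
    rw [hq] at hpr
    have hsq : s ∉ q.support := ((Walk.cons_isPath_iff _ _).1 hpr).2
    have hzS : z ∉ S := by
      intro hz
      have := hspec z hz q.reverse
      rw [Walk.support_reverse, List.mem_reverse] at this
      exact hsq this
    refine outside_bridge hS hmax h1.symm hzS ?_
    have r1 : (G.deleteEdges {s(z, s)}).Reachable z u := by
      refine ⟨q.toDeleteEdges _ ?_⟩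
      intro e he hmem
      rw [Set.mem_singleton_iff] at hmem
      subst hmem
      exact hsq (q.snd_mem_support_of_mem_edges he)
    have r2 : (G.deleteEdges {s(z, s)}).Reachable u y := by
      refine ⟨w0.toDeleteEdges _ ?_⟩
      intro e he hmem
      rw [Set.mem_singleton_iff] at hmem
      subst hmem
      exact hw0 (w0.snd_mem_support_of_mem_edges he)
    have r3 : (G.deleteEdges {s(z, s)}).Reachable s y := by
      refine ⟨(w.bypass.dropUntil s hsγ).toDeleteEdges _ ?_⟩
      intro e he hmem
      rw [Set.mem_singleton_iff] at hmem
      subst hmem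
      have hz2 : z ∈ (w.bypass.dropUntil s hsγ).support :=
        Walk.fst_mem_support_of_mem_edges _ he
      have hzs : z ≠ s := fun h => hzS (h ▸ hsS)
      have hz2' : z ∈ (w.bypass.dropUntil s hsγ).support.tail := by
        have := (w.bypass.dropUntil s hsγ).support_eq_cons
        rw [this, List.mem_cons] at hz2
        exact hz2.resolve_left hzs
      have hz1 : z ∈ (w.bypass.takeUntil s hsγ).support := by
        have : z ∈ (w.bypass.takeUntil s hsγ).reverse.support := by
          rw [hq, Walk.support_cons]
          exact List.mem_cons_of_mem _ q.start_mem_support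
        rwa [Walk.support_reverse, List.mem_reverse] at this
      have hnd := hγp.support_nodup
      rw [← Walk.take_spec w.bypass hsγ, Walk.support_append] at hnd
      exact List.disjoint_of_nodup_append hnd hz1 hz2'
    exact r1.trans (r2.trans r3.symm)
  · have hγe : ∀ e' ∈ w.bypass.edges, e' ∉ ({s(a, b)} : Set (Sym2 V)) := by
      intro e' he' hmem
      rw [Set.mem_singleton_iff] at hmem
      subst hmem
      have haγ : a ∈ w.bypass.support := Walk.fst_mem_support_of_mem_edges _ he'
      have := hspec a haS (w.bypass.takeUntil a haγ)
      exact hsγ (Walk.support_takeUntil_subset _ _ this)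
    calc (G.deleteEdges {s(a, b)}).edist u y
        ≤ ((w.bypass.toDeleteEdges _ hγe).length : ℕ∞) := edist_le _
      _ = (w.bypass.length : ℕ∞) := by rw [Walk.length_transfer]
      _ ≤ (w.length : ℕ∞) := by exact_mod_cast w.length_bypass_le
      _ = G.edist u y := hw


lemma monitor_to_anchor (hG : G.Connected) {u s : V} (hu : u ∉ S) (hsS : s ∈ S)
    (hspec : ∀ z ∈ S, ∀ w : G.Walk u z, s ∈ w.support)
    {a b : V} (haS : a ∈ S) (hbS : b ∈ S) (hab : G.Adj a b)
    (hm : monitors G u s(a, b)) : monitors G s s(a, b) := by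
  obtain ⟨y, hy⟩ := hm
  by_cases hall : ∀ w : G.Walk u y, s ∈ w.support
  · refine ⟨y, ?_⟩
    have h1 := edist_split hS hmax hall
    have hall' : ∀ w : (G.deleteEdges {s(a, b)}).Walk u y, s ∈ w.support := by
      intro w
      have hedges : ∀ e ∈ w.edges, e ∈ G.edgeSet := fun e he => by
        have := w.edges_subset_edgeSet he
        rw [edgeSet_deleteEdges] at this
        exact this.1
      have := hall (w.transfer G hedges)
      rwa [Walk.support_transfer] at this
    have h2 := edist_split hS hmax hall'
    have h3 := edist_del_anchor hS hmax hG hsS hspec haS hbS hab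
    rw [h1, h2, h3] at hy
    intro hc
    exact hy (by rw [hc])
  · push_neg at hall
    obtain ⟨w0, hw0⟩ := hall
    exact absurd (edist_eq_of_avoid hS hmax hG hu hsS hspec haS hbS w0 hw0).symm hy

lemma witness_to_S (hG : G.Connected) (hne : S.Nonempty) {x : V} (hx : x ∈ S)
    {a b : V} (haS : a ∈ S) (hbS : b ∈ S) (hab : G.Adj a b)
    (hm : monitors G x s(a, b)) :
    ∃ t ∈ S, G.edist x t ≠ (G.deleteEdges {s(a, b)}).edist x t := by
  obtain ⟨y, hy⟩ := hm
  by_cases hyS : y ∈ S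
  · exact ⟨y, hyS, hy⟩
  · obtain ⟨t, htS, hspec⟩ := anchor_spec hS hmax hG hne hyS
    refine ⟨t, htS, ?_⟩
    have hall : ∀ w : G.Walk x y, t ∈ w.support := by
      intro w
      have := hspec x hx w.reverse
      rwa [Walk.support_reverse, List.mem_reverse] at this
    have h1 : G.edist x y = G.edist x t + G.edist t y := edist_split hS hmax hall
    have hall' : ∀ w : (G.deleteEdges {s(a, b)}).Walk x y, t ∈ w.support := by
      intro w
      have hedges : ∀ e ∈ w.edges, e ∈ G.edgeSet := fun e he => by
        have := w.edges_subset_edgeSet he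
        rw [edgeSet_deleteEdges] at this
        exact this.1
      have := hall (w.transfer G hedges)
      rwa [Walk.support_transfer] at this
    have h2 : (G.deleteEdges {s(a, b)}).edist x y =
        (G.deleteEdges {s(a, b)}).edist x t + (G.deleteEdges {s(a, b)}).edist t y :=
      edist_split hS hmax hall'
    have h3 : (G.deleteEdges {s(a, b)}).edist t y = G.edist t y := by
      rw [edist_comm, @edist_comm _ G]
      exact edist_del_anchor hS hmax hG htS hspec haS hbS hab
    rw [h1, h2, h3] at hy
    intro hc
    exact hy (by rw [hc])

end Part23

lemma lift_walk {H : SimpleGraph V} : ∀ {x y : V} (w : H.Walk x y) (hx : x ∈ S) (hy : y ∈ S),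
    (∀ v ∈ w.support, v ∈ S) →
    ∃ w' : (H.induce S).Walk ⟨x, hx⟩ ⟨y, hy⟩, w'.length = w.length := by
  intro x y w
  induction w with
  | nil => intro hx hy _; exact ⟨Walk.nil, rfl⟩
  | @cons x v y h q ih =>
    intro hx hy hsupp
    have hv : v ∈ S := hsupp v (by rw [Walk.support_cons]; exact List.mem_cons_of_mem _ q.start_mem_support)
    obtain ⟨q', hq'⟩ := ih hv hy (fun z hz => hsupp z (by rw [Walk.support_cons]; exact List.mem_cons_of_mem _ hz))
    refine ⟨Walk.cons (by exact h : (H.induce S).Adj ⟨x, hx⟩ ⟨v, hv⟩) q', by exact congrArg (· + 1) hq'⟩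

lemma proj_walk {H : SimpleGraph V} : ∀ {x y : ↥S} (w : (H.induce S).Walk x y),
    ∃ w0 : H.Walk ↑x ↑y, w0.length = w.length := by
  intro x y w
  induction w with
  | nil => exact ⟨Walk.nil, rfl⟩
  | @cons x v y h q ih =>
    obtain ⟨q0, hq0⟩ := ih
    exact ⟨Walk.cons (by exact h) q0, by exact congrArg (· + 1) hq0⟩

lemma edist_induce_gen [Finite V] [DecidableEq V] {H : SimpleGraph V}
    (hsub : ∀ {c d : V} (p : H.Walk c d), p.IsPath → c ∈ S → d ∈ S → ∀ v ∈ p.support, v ∈ S)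
    (x y : ↥S) : (H.induce S).edist x y = H.edist ↑x ↑y := by
  refine le_antisymm ?_ ?_
  · by_cases htop : H.edist ↑x ↑y = ⊤
    · rw [htop]; exact le_top
    · obtain ⟨w, hw⟩ := (edist_ne_top_iff_reachable.1 htop).exists_walk_length_eq_edist
      have hsupp := hsub w.bypass w.bypass_isPath x.2 y.2
      obtain ⟨w', hw'⟩ := lift_walk w.bypass x.2 y.2 hsupp
      calc (H.induce S).edist x y ≤ (w'.length : ℕ∞) := edist_le _
        _ ≤ (w.length : ℕ∞) := by exact_mod_cast hw' ▸ w.length_bypass_le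
        _ = H.edist ↑x ↑y := hw
  · by_cases htop : (H.induce S).edist x y = ⊤
    · rw [htop]; exact le_top
    · obtain ⟨w', hw'⟩ := (edist_ne_top_iff_reachable.1 htop).exists_walk_length_eq_edist
      obtain ⟨w0, hw0⟩ := proj_walk w'
      calc H.edist ↑x ↑y ≤ (w0.length : ℕ∞) := edist_le _
        _ = (w'.length : ℕ∞) := by exact_mod_cast hw0
        _ = (H.induce S).edist x y := hw'

lemma del_comm (e' : Sym2 ↥S) :
    (G.deleteEdges {Sym2.map (Subtype.val) e'}).induce S = (G.induce S).deleteEdges {e'} := by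
  ext c d
  have key : s((c : V), (d : V)) = Sym2.map Subtype.val e' ↔ s(c, d) = e' := by
    constructor
    · intro h
      apply Sym2.map.injective Subtype.val_injective
      rw [Sym2.map_pair_eq]
      exact h
    · intro h
      rw [← h, Sym2.map_pair_eq]
  simp only [comap_adj, Function.Embedding.coe_subtype, deleteEdges_adj,
    Set.mem_singleton_iff, key]

lemma monitors_of_bridge [DecidableEq V] (hG : G.Connected) {a b : V} (hab : G.Adj a b)
    (hbr : ¬ (G.deleteEdges {s(a, b)}).Reachable a b) (x : V) : monitors G x s(a, b) := by
  have hx : (G.deleteEdges {s(a, b)}).Reachable x a ∨ (G.deleteEdges {s(a, b)}).Reachable x b := by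
    have hp : (hG.preconnected x a).some.bypass.IsPath := Walk.bypass_isPath _
    set p := (hG.preconnected x a).some.bypass with hpdef
    by_cases hmem : s(a, b) ∈ p.edges
    · right
      have hbp : b ∈ p.support := Walk.snd_mem_support_of_mem_edges _ hmem
      have hq_ne : s(a, b) ∉ (p.takeUntil b hbp).edges := by
        intro hmem2
        have ha2 : a ∈ (p.takeUntil b hbp).support := Walk.fst_mem_support_of_mem_edges _ hmem2
        have ha3 : a ∈ (p.dropUntil b hbp).support.tail :=
          Walk.end_mem_tail_support_of_ne (Ne.symm hab.ne) _
        have hnd := hp.support_nodup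
        rw [← Walk.take_spec p hbp, Walk.support_append] at hnd
        exact List.disjoint_of_nodup_append hnd ha2 ha3
      exact ⟨(p.takeUntil b hbp).toDeleteEdges _
        (fun e he hm => hq_ne ((Set.mem_singleton_iff.1 hm) ▸ he))⟩
    · left
      exact ⟨p.toDeleteEdges _ (fun e he hm => hmem ((Set.mem_singleton_iff.1 hm) ▸ he))⟩
  have hconn_ne : ∀ c : V, G.edist x c ≠ ⊤ :=
    fun c => edist_ne_top_iff_reachable.2 (hG.preconnected x c)
  rcases hx with h | h
  · refine ⟨b, fun hc => ?_⟩
    have hr : (G.deleteEdges {s(a, b)}).Reachable x b :=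
      edist_ne_top_iff_reachable.1 (hc ▸ hconn_ne b)
    exact hbr (h.symm.trans hr)
  · refine ⟨a, fun hc => ?_⟩
    have hr : (G.deleteEdges {s(a, b)}).Reachable x a :=
      edist_ne_top_iff_reachable.1 (hc ▸ hconn_ne a)
    exact hbr (hr.symm.trans h)

lemma isDEMSet_univ {W : Type*} (K : SimpleGraph W) : IsDEMSet K Set.univ := by
  intro e he
  revert he
  refine Sym2.ind ?_ e
  intro a b he
  rw [mem_edgeSet] at he
  refine ⟨a, trivial, b, fun hc => ?_⟩
  have h1 : K.edist a b = 1 := edist_eq_one_iff_adj.2 he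
  have h2 : ¬ (K.deleteEdges {s(a, b)}).Adj a b := by simp
  rw [h1] at hc
  exact h2 (edist_eq_one_iff_adj.1 hc.symm)


end DEMHelpers

theorem stmt17 {V : Type*} [Fintype V] [DecidableEq V] (G : SimpleGraph V)
    (hG : G.Connected) (S : Set V) [DecidablePred (· ∈ S)]
    (hS : ∀ v ∈ S, 2 ≤ (S ∩ G.neighborSet v).ncard)
    (hmax : ∀ T : Set V, (∀ v ∈ T, 2 ≤ (T ∩ G.neighborSet v).ncard) → T ⊆ S)
    (hne : S.Nonempty) :
    dem V G = dem S (G.induce S) := by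
  classical
  have hsubG : ∀ {c d : V} (p : G.Walk c d), p.IsPath → c ∈ S → d ∈ S →
      ∀ v ∈ p.support, v ∈ S :=
    fun p hp hc hd => path_support_subset hS hmax hc hd hp
  have hsubDel : ∀ (E : Set (Sym2 V)) {c d : V} (p : (G.deleteEdges E).Walk c d),
      p.IsPath → c ∈ S → d ∈ S → ∀ v ∈ p.support, v ∈ S := by
    intro E c d p hp hc hd v hv
    have hedges : ∀ e ∈ p.edges, e ∈ G.edgeSet := fun e he => by
      have := p.edges_subset_edgeSet he
      rw [edgeSet_deleteEdges] at this
      exact this.1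
    refine path_support_subset hS hmax hc hd (hp.transfer hedges) v ?_
    rwa [Walk.support_transfer]
  have hedistG : ∀ x y : ↥S, (G.induce S).edist x y = G.edist ↑x ↑y :=
    fun x y => edist_induce_gen (fun p hp hc hd => hsubG p hp hc hd) x y
  have hedistDel : ∀ (c d : ↥S) (x y : ↥S),
      ((G.induce S).deleteEdges {s(c, d)}).edist x y
        = (G.deleteEdges {s((c : V), (d : V))}).edist ↑x ↑y := by
    intro c d x y
    have h := del_comm (G := G) (S := S) s(c, d)
    rw [Sym2.map_pair_eq] at h
    rw [← h]
    exact edist_induce_gen (fun p hp hc hd => hsubDel _ p hp hc hd) x y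
  have hsetG' : {k | ∃ M : Finset ↥S, M.card = k ∧ IsDEMSet (G.induce S) ↑M}.Nonempty :=
    ⟨_, Finset.univ, rfl, by rw [Finset.coe_univ]; exact isDEMSet_univ _⟩
  have hsetG : {k | ∃ M : Finset V, M.card = k ∧ IsDEMSet G ↑M}.Nonempty :=
    ⟨_, Finset.univ, rfl, by rw [Finset.coe_univ]; exact isDEMSet_univ _⟩
  obtain ⟨v0, hv0⟩ := hne
  have hne : S.Nonempty := ⟨v0, hv0⟩
  have hnon : (S ∩ G.neighborSet v0).Nonempty := by
    have := hS v0 hv0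
    exact Set.nonempty_of_ncard_ne_zero (by omega)
  obtain ⟨w0, hw0S, hw0adj⟩ := hnon
  have hedge0 : s((⟨v0, hv0⟩ : ↥S), (⟨w0, hw0S⟩ : ↥S)) ∈ (G.induce S).edgeSet := by
    rw [mem_edgeSet]
    exact hw0adj
  refine le_antisymm ?_ ?_
  · obtain ⟨M', hM'card, hM'⟩ := Nat.sInf_mem hsetG'
    obtain ⟨x0, hx0, -⟩ := hM' _ hedge0
    have hDEM : IsDEMSet G ↑(M'.image (Subtype.val)) := by
      intro e he
      revert he
      refine Sym2.ind ?_ e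
      intro a b he
      rw [mem_edgeSet] at he
      by_cases haS : a ∈ S
      · by_cases hbS : b ∈ S
        · have he' : s((⟨a, haS⟩ : ↥S), (⟨b, hbS⟩ : ↥S)) ∈ (G.induce S).edgeSet := by
            rw [mem_edgeSet]
            exact he
          obtain ⟨x, hxM, y, hy⟩ := hM' _ he'
          refine ⟨↑x, ?_, ↑y, ?_⟩
          · rw [Finset.coe_image]
            exact Set.mem_image_of_mem _ hxM
          · rw [hedistG, hedistDel] at hy
            exact hy
        · have hbr := outside_bridge hS hmax he.symm hbS
          have hm := monitors_of_bridge hG he.symm hbr (↑x0 : V)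
          rw [Sym2.eq_swap] at hm
          exact ⟨↑x0, by rw [Finset.coe_image]; exact Set.mem_image_of_mem _ hx0, hm⟩
      · have hbr := outside_bridge hS hmax he haS
        exact ⟨↑x0, by rw [Finset.coe_image]; exact Set.mem_image_of_mem _ hx0,
          monitors_of_bridge hG he hbr _⟩
    have hle : dem V G ≤ (M'.image Subtype.val).card := Nat.sInf_le ⟨_, rfl, hDEM⟩
    rw [Finset.card_image_of_injective _ Subtype.val_injective] at hle
    exact hle.trans hM'card.le
  · obtain ⟨M, hMcard, hMDEM⟩ := Nat.sInf_mem hsetG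
    have hanchor : ∀ u : V, ∃ s : ↥S, (u ∈ S → (s : V) = u) ∧
        (u ∉ S → ∀ z ∈ S, ∀ w : G.Walk u z, (s : V) ∈ w.support) := by
      intro u
      by_cases hu : u ∈ S
      · exact ⟨⟨u, hu⟩, fun _ => rfl, fun h => absurd hu h⟩
      · obtain ⟨s, hsS, hspec⟩ := anchor_spec hS hmax hG hne hu
        exact ⟨⟨s, hsS⟩, fun h => absurd h hu, fun _ => hspec⟩
    choose f hf1 hf2 using hanchor
    have hDEM'' : IsDEMSet (G.induce S) ↑(M.image f) := by
      intro e' he'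
      revert he'
      refine Sym2.ind ?_ e'
      intro c d he'
      rw [mem_edgeSet] at he'
      have hadj : G.Adj ↑c ↑d := he'
      obtain ⟨u, huM, humon⟩ := hMDEM s((c : V), (d : V)) ((G.mem_edgeSet).2 hadj)
      have hmon_s : monitors G ↑(f u) s((c : V), (d : V)) := by
        by_cases hu : u ∈ S
        · rw [hf1 u hu]
          exact humon
        · exact monitor_to_anchor hS hmax hG hu (f u).2 (hf2 u hu) c.2 d.2 hadj humon
      obtain ⟨t, htS, hdist⟩ := witness_to_S hS hmax hG hne (f u).2 c.2 d.2 hadj hmon_s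
      refine ⟨f u, ?_, ⟨⟨t, htS⟩, ?_⟩⟩
      · rw [Finset.coe_image]
        exact Set.mem_image_of_mem _ huM
      · rw [hedistG, hedistDel]
        exact hdist
    have hle : dem S (G.induce S) ≤ (M.image f).card := Nat.sInf_le ⟨_, rfl, hDEM''⟩
    exact hle.trans (Finset.card_image_le.trans hMcard.le)
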